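/- Let R ∈ (0, π]. Then the Fourier coefficients of the Hegselmann–Krause interaction W_R(θ) = (R − 2π|θ|)_+² on 𝕋 are: ∫_𝕋 W_R(θ) dθ = R³/(3π), and for every integer ℓ ≥ 1, ∫_𝕋 W_R(θ) e^{-2πiℓθ} dθ = (2/(πℓ³)) (ℓR − sin(ℓR)). -/

import Mathlib

open MeasureTheory Real Complex
open scoped Real

noncomputable section

/-- The normalized Haar (Lebesgue) probability measure on the circle `𝕋 = ℝ/ℤ`. -/
def circleMeasure : Measure UnitAddCircle := AddCircle.haarAddCircle

/-- The Hegselmann–Krause interaction `W_R(θ) = (R − 2π|θ|)_+²`, where `‖θ‖` is the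
distance from `θ ∈ ℝ/ℤ` to the nearest integer, i.e. the absolute value of the
representative of `θ` in `[-1/2, 1/2)`. -/
def WHK (R : ℝ) (θ : UnitAddCircle) : ℝ := max (R - 2 * π * ‖θ‖) 0 ^ 2


lemma real_part (R : ℝ) (hR0 : 0 < R) (hRπ : R ≤ π) :
    ∫ x in (-(1/2) : ℝ)..(1/2), max (R - 2 * π * |x|) 0 ^ 2 = R ^ 3 / (3 * π) := by
  have hπ : (0:ℝ) < π := Real.pi_pos
  set r : ℝ := R / (2 * π) with hr
  have hr0 : 0 < r := by positivity
  have hr2 : r ≤ 1/2 := by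
    rw [hr, div_le_iff₀ (by positivity)]; linarith
  have hcont : Continuous fun x : ℝ => max (R - 2 * π * |x|) 0 ^ 2 := by fun_prop
  have hint : ∀ a b : ℝ, IntervalIntegrable (fun x : ℝ => max (R - 2 * π * |x|) 0 ^ 2)
      volume a b := fun a b => hcont.intervalIntegrable a b
  have hrR : 2 * π * r = R := by rw [hr]; field_simp
  have hzero : ∀ x : ℝ, r ≤ |x| → max (R - 2 * π * |x|) 0 ^ 2 = 0 := by
    intro x hx
    have : R - 2 * π * |x| ≤ 0 := by nlinarith
    simp [max_eq_right this]
  have h1 : ∫ x in (-(1/2) : ℝ)..(-r), max (R - 2 * π * |x|) 0 ^ 2 = 0 := by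
    rw [intervalIntegral.integral_congr (g := fun _ => 0) ?_, intervalIntegral.integral_zero]
    intro x hx
    rw [Set.uIcc_of_le (by linarith)] at hx
    exact hzero x (by rw [_root_.abs_of_nonpos (by linarith [hx.2])]; linarith [hx.2])
  have h4 : ∫ x in (r : ℝ)..(1/2), max (R - 2 * π * |x|) 0 ^ 2 = 0 := by
    rw [intervalIntegral.integral_congr (g := fun _ => 0) ?_, intervalIntegral.integral_zero]
    intro x hx
    rw [Set.uIcc_of_le (by linarith)] at hx
    exact hzero x (by rw [_root_.abs_of_nonneg (by linarith [hx.1])]; exact hx.1)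
  have h3 : ∫ x in (0 : ℝ)..r, max (R - 2 * π * |x|) 0 ^ 2 = R^3/(6*π) := by
    rw [intervalIntegral.integral_congr (g := fun x => (R - 2*π*x)^2) ?_]
    · have hd : ∀ x ∈ Set.uIcc (0:ℝ) r, HasDerivAt (fun y => -(R - 2*π*y)^3/(6*π))
          ((R - 2*π*x)^2) x := by
        intro x _
        have h := ((((hasDerivAt_id x).const_mul (2*π)).const_sub R).pow 3).neg.div_const (6*π)
        simp only [id_eq] at h
        refine h.congr_deriv ?_
        push_cast
        field_simp
        try ring
      rw [intervalIntegral.integral_eq_sub_of_hasDerivAt hd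
        (by apply Continuous.intervalIntegrable; fun_prop)]
      have h0 : R - 2*π*r = 0 := by linarith
      rw [h0]
      field_simp
      try ring
    · intro x hx
      rw [Set.uIcc_of_le (by linarith)] at hx
      have habs : |x| = x := _root_.abs_of_nonneg hx.1
      have hp : 0 ≤ R - 2*π*x := by nlinarith [hx.2]
      have hmax : max (R - 2*π*|x|) 0 = R - 2*π*x := by rw [habs, max_eq_left hp]
      simp only [hmax]
  have h2 : ∫ x in (-r : ℝ)..0, max (R - 2 * π * |x|) 0 ^ 2 = R^3/(6*π) := by
    rw [intervalIntegral.integral_congr (g := fun x => (R + 2*π*x)^2) ?_]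
    · have hd : ∀ x ∈ Set.uIcc (-r:ℝ) 0, HasDerivAt (fun y => (R + 2*π*y)^3/(6*π))
          ((R + 2*π*x)^2) x := by
        intro x _
        have h := ((((hasDerivAt_id x).const_mul (2*π)).const_add R).pow 3).div_const (6*π)
        simp only [id_eq] at h
        refine h.congr_deriv ?_
        push_cast
        field_simp
        try ring
      rw [intervalIntegral.integral_eq_sub_of_hasDerivAt hd
        (by apply Continuous.intervalIntegrable; fun_prop)]
      have h0 : R + 2*π*(-r) = 0 := by linarith
      rw [h0]
      field_simp
      try ring
    · intro x hx
      rw [Set.uIcc_of_le (by linarith)] at hx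
      have habs : |x| = -x := _root_.abs_of_nonpos hx.2
      have hp : 0 ≤ R - 2*π*(-x) := by nlinarith [hx.1]
      have hmax : max (R - 2*π*|x|) 0 = R + 2*π*x := by
        rw [habs, max_eq_left hp]; ring
      simp only [hmax]
  rw [← intervalIntegral.integral_add_adjacent_intervals (b := -r) (hint _ _) (hint _ _),
    ← intervalIntegral.integral_add_adjacent_intervals (a := -r) (b := 0) (hint _ _) (hint _ _),
    ← intervalIntegral.integral_add_adjacent_intervals (a := 0) (b := r) (hint _ _) (hint _ _),
    h1, h2, h3, h4]
  field_simp
  try ring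


set_option maxHeartbeats 1000000 in
lemma cplx_part (R : ℝ) (hR0 : 0 < R) (hRπ : R ≤ π) (ℓ : ℕ) (hℓ : 1 ≤ ℓ) :
    ∫ x in (-(1/2) : ℝ)..(1/2),
        Complex.exp ((-(2*π*ℓ) * Complex.I) * x) * ((max (R - 2 * π * |x|) 0 ^ 2 : ℝ) : ℂ)
      = ((2 / (π * (ℓ : ℝ) ^ 3) * ((ℓ : ℝ) * R - Real.sin (ℓ * R)) : ℝ) : ℂ) := by
  have hπ : (0:ℝ) < π := Real.pi_pos
  have hπc : (π:ℂ) ≠ 0 := by exact_mod_cast hπ.ne'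
  have hℓ0 : (0:ℝ) < ℓ := by exact_mod_cast hℓ
  have hℓc : ((ℓ:ℕ):ℂ) ≠ 0 := by exact_mod_cast hℓ0.ne'
  set c : ℂ := -(2*π*ℓ) * Complex.I with hc
  have hcne : c ≠ 0 := by
    rw [hc]
    apply mul_ne_zero _ Complex.I_ne_zero
    apply neg_ne_zero.mpr
    exact mul_ne_zero (mul_ne_zero two_ne_zero hπc) hℓc
  -- coefficients of the antiderivatives
  set a : ℂ := 2*π*Complex.I/ℓ with ha
  set b : ℂ := -(2*R*Complex.I)/ℓ + 2/(ℓ:ℂ)^2 with hb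
  set d : ℂ := ((R:ℂ)^2 - 2/(ℓ:ℂ)^2)*Complex.I/(2*π*ℓ) - (R:ℂ)/(π*(ℓ:ℂ)^2) with hd
  set b2 : ℂ := (2*R*Complex.I)/ℓ + 2/(ℓ:ℂ)^2 with hb2
  set d2 : ℂ := ((R:ℂ)^2 - 2/(ℓ:ℂ)^2)*Complex.I/(2*π*ℓ) + (R:ℂ)/(π*(ℓ:ℂ)^2) with hd2
  have hca : c * a = 4*(π:ℂ)^2 := by
    rw [hc, ha]; field_simp [hπc, hℓc]; ring_nf; simp only [Complex.I_sq]; field_simp [hπc, hℓc]; try ring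
  have hcb : c * b + 2*a = -(4*(π:ℂ)*R) := by
    rw [hc, hb, ha]; field_simp [hπc, hℓc]; ring_nf; simp only [Complex.I_sq]; field_simp [hπc, hℓc]; try ring
  have hcd : c * d + b = (R:ℂ)^2 := by
    rw [hc, hd, hb]; field_simp [hπc, hℓc]; ring_nf; simp only [Complex.I_sq]; field_simp [hπc, hℓc]; try ring
  have hcb2 : c * b2 + 2*a = 4*(π:ℂ)*R := by
    rw [hc, hb2, ha]; field_simp [hπc, hℓc]; ring_nf; simp only [Complex.I_sq]; field_simp [hπc, hℓc]; try ring
  have hcd2 : c * d2 + b2 = (R:ℂ)^2 := by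
    rw [hc, hd2, hb2]; field_simp [hπc, hℓc]; ring_nf; simp only [Complex.I_sq]; field_simp [hπc, hℓc]; try ring
  clear_value c a b d b2 d2
  -- geometry of r
  set r : ℝ := R / (2 * π) with hr
  have hr0 : 0 < r := by positivity
  have hr2 : r ≤ 1/2 := by rw [hr, div_le_iff₀ (by positivity)]; linarith
  have hrR : 2 * π * r = R := by rw [hr]; field_simp
  clear_value r
  -- derivative helpers
  have hE : ∀ x : ℝ, HasDerivAt (fun y : ℝ => Complex.exp (c * y)) (c * Complex.exp (c * x)) x := by
    intro x
    have h1 : HasDerivAt (fun z : ℂ => Complex.exp (c * z)) (c * Complex.exp (c * x)) (x : ℂ) := by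
      simpa [mul_comm] using ((hasDerivAt_id ((x:ℂ))).const_mul c).cexp
    exact h1.comp_ofReal
  have hPoly : ∀ (u v w : ℂ) (x : ℝ),
      HasDerivAt (fun y : ℝ => u * (y:ℂ)^2 + v * (y:ℂ) + w) (2*u*(x:ℂ) + v) x := by
    intro u v w x
    have h1 : HasDerivAt (fun z : ℂ => u * z^2 + v * z + w) (2*u*(x:ℂ) + v) (x:ℂ) := by
      have := (((hasDerivAt_pow 2 ((x:ℂ))).const_mul u).add
        (((hasDerivAt_id ((x:ℂ))).const_mul v))).add_const w
      refine this.congr_deriv ?_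
      push_cast
      ring
    exact h1.comp_ofReal
  have hFd : ∀ x : ℝ, HasDerivAt (fun y : ℝ => Complex.exp (c*y) * (a*(y:ℂ)^2 + b*(y:ℂ) + d))
      (Complex.exp (c*x) * ((R:ℂ) - 2*π*(x:ℂ))^2) x := by
    intro x
    have h := (hE x).mul (hPoly a b d x)
    refine h.congr_deriv ?_
    linear_combination Complex.exp (c*(x:ℂ)) * (((x:ℂ))^2 * hca + ((x:ℂ)) * hcb + hcd)
  have hGd : ∀ x : ℝ, HasDerivAt (fun y : ℝ => Complex.exp (c*y) * (a*(y:ℂ)^2 + b2*(y:ℂ) + d2))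
      (Complex.exp (c*x) * ((R:ℂ) + 2*π*(x:ℂ))^2) x := by
    intro x
    have h := (hE x).mul (hPoly a b2 d2 x)
    refine h.congr_deriv ?_
    linear_combination Complex.exp (c*(x:ℂ)) * (((x:ℂ))^2 * hca + ((x:ℂ)) * hcb2 + hcd2)
  -- integrand and its pieces
  set f : ℝ → ℂ := fun x =>
    Complex.exp (c * x) * ((max (R - 2 * π * |x|) 0 ^ 2 : ℝ) : ℂ) with hf
  have hcont : Continuous f := by rw [hf]; fun_prop
  have hint : ∀ p q : ℝ, IntervalIntegrable f volume p q := fun p q => hcont.intervalIntegrable p q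
  have hzero : ∀ x : ℝ, r ≤ |x| → f x = 0 := by
    intro x hx
    have h1 : R - 2 * π * |x| ≤ 0 := by nlinarith
    simp [hf, max_eq_right h1]
  have h1 : ∫ x in (-(1/2) : ℝ)..(-r), f x = 0 := by
    rw [intervalIntegral.integral_congr (g := fun _ => 0) ?_, intervalIntegral.integral_zero]
    intro x hx
    rw [Set.uIcc_of_le (by linarith)] at hx
    exact hzero x (by rw [_root_.abs_of_nonpos (by linarith [hx.2])]; linarith [hx.2])
  have h4 : ∫ x in (r : ℝ)..(1/2), f x = 0 := by
    rw [intervalIntegral.integral_congr (g := fun _ => 0) ?_, intervalIntegral.integral_zero]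
    intro x hx
    rw [Set.uIcc_of_le (by linarith)] at hx
    exact hzero x (by rw [_root_.abs_of_nonneg (by linarith [hx.1])]; exact hx.1)
  have h3 : ∫ x in (0 : ℝ)..r, f x
      = Complex.exp (c*r) * (a*(r:ℂ)^2 + b*(r:ℂ) + d) - d := by
    rw [intervalIntegral.integral_congr
      (g := fun x : ℝ => Complex.exp (c*x) * ((R:ℂ) - 2*π*(x:ℂ))^2) ?_]
    · rw [intervalIntegral.integral_eq_sub_of_hasDerivAt (fun x _ => hFd x)
        (by apply Continuous.intervalIntegrable; fun_prop)]
      push_cast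
      simp
    · intro x hx
      rw [Set.uIcc_of_le (by linarith)] at hx
      have habs : |x| = x := _root_.abs_of_nonneg hx.1
      have hp : 0 ≤ R - 2*π*x := by nlinarith [hx.2]
      have hmax : max (R - 2*π*|x|) 0 = R - 2*π*x := by rw [habs, max_eq_left hp]
      simp only [hf, hmax]
      push_cast
      ring
  have h2 : ∫ x in (-r : ℝ)..(0:ℝ), f x
      = d2 - Complex.exp (c*(-r:ℝ)) * (a*(r:ℂ)^2 - b2*(r:ℂ) + d2) := by
    rw [intervalIntegral.integral_congr
      (g := fun x : ℝ => Complex.exp (c*x) * ((R:ℂ) + 2*π*(x:ℂ))^2) ?_]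
    · rw [intervalIntegral.integral_eq_sub_of_hasDerivAt (fun x _ => hGd x)
        (by apply Continuous.intervalIntegrable; fun_prop)]
      push_cast
      simp
      ring
    · intro x hx
      rw [Set.uIcc_of_le (by linarith)] at hx
      have habs : |x| = -x := _root_.abs_of_nonpos hx.2
      have hp : 0 ≤ R - 2*π*(-x) := by nlinarith [hx.1]
      have hmax : max (R - 2*π*|x|) 0 = R + 2*π*x := by
        rw [habs, max_eq_left hp]; ring
      simp only [hf, hmax]
      push_cast
      ring
  have hsplit : ∫ x in (-(1/2) : ℝ)..(1/2), f x
      = Complex.exp (c*r) * (a*(r:ℂ)^2 + b*(r:ℂ) + d) - d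
        + (d2 - Complex.exp (c*(-r:ℝ)) * (a*(r:ℂ)^2 - b2*(r:ℂ) + d2)) := by
    rw [← intervalIntegral.integral_add_adjacent_intervals (b := -r) (hint _ _) (hint _ _),
      ← intervalIntegral.integral_add_adjacent_intervals (a := -r) (b := 0) (hint _ _) (hint _ _),
      ← intervalIntegral.integral_add_adjacent_intervals (a := 0) (b := r) (hint _ _) (hint _ _),
      h1, h2, h3, h4]
    ring
  rw [hsplit]
  -- evaluate the exponentials
  have hcr : c * (r:ℂ) = -(((↑ℓ * R : ℝ)):ℂ) * Complex.I := by
    rw [hc, hr]; push_cast; field_simp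
  have hcr' : c * ((-r:ℝ):ℂ) = (((↑ℓ * R : ℝ)):ℂ) * Complex.I := by
    rw [hc, hr]; push_cast; field_simp
  rw [hcr, hcr', show (-(((↑ℓ * R : ℝ)):ℂ)) * Complex.I = (-((↑ℓ * R : ℝ)):ℂ) * Complex.I by push_cast; ring]
  rw [Complex.exp_mul_I, Complex.exp_mul_I]
  rw [Complex.cos_neg, Complex.sin_neg]
  simp only [← Complex.ofReal_cos, ← Complex.ofReal_sin]
  rw [ha, hb, hd, hb2, hd2, hr]
  push_cast
  field_simp [hπc, hℓc]
  ring_nf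
  simp only [Complex.I_sq]
  field_simp [hπc, hℓc]
  try ring

lemma whk_coe (R : ℝ) (x : ℝ) (hx : |x| ≤ 1/2) :
    WHK R ((x : ℝ) : UnitAddCircle) = max (R - 2 * π * |x|) 0 ^ 2 := by
  rw [WHK, AddCircle.norm_coe_eq_abs_iff (p := 1) one_ne_zero |>.mpr (by simpa using hx)]

lemma circleMeasure_eq : circleMeasure = (volume : Measure UnitAddCircle) := by
  rw [circleMeasure, AddCircle.volume_eq_smul_haarAddCircle]
  simp

/-- **Fourier coefficients of the Hegselmann–Krause interaction.** For `R ∈ (0, π]`,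
`∫ W_R = R³/(3π)` and `Ŵ_R(ℓ) = (2/(πℓ³))(ℓR − sin(ℓR))` for every `ℓ ≥ 1`. -/
theorem HK_fourier_coeffs (R : ℝ) (hR0 : 0 < R) (hRπ : R ≤ π) :
    (∫ θ, WHK R θ ∂circleMeasure = R ^ 3 / (3 * π)) ∧
    (∀ ℓ : ℕ, 1 ≤ ℓ →
      fourierCoeff (fun θ => (WHK R θ : ℂ)) (ℓ : ℤ)
        = ((2 / (π * (ℓ : ℝ) ^ 3) * ((ℓ : ℝ) * R - Real.sin (ℓ * R)) : ℝ) : ℂ)) := by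
  constructor
  · rw [circleMeasure_eq, ← UnitAddCircle.integral_preimage (-(1/2)) (fun θ => WHK R θ),
      ← intervalIntegral.integral_of_le (by norm_num : (-(1/2) : ℝ) ≤ -(1/2) + 1)]
    rw [show (-(1/2) + 1 : ℝ) = 1/2 by norm_num]
    rw [intervalIntegral.integral_congr (g := fun x : ℝ => max (R - 2 * π * |x|) 0 ^ 2) ?_]
    · exact real_part R hR0 hRπ
    · intro x hx
      rw [Set.uIcc_of_le (by norm_num)] at hx
      exact whk_coe R x (abs_le.mpr ⟨hx.1, hx.2⟩)
  · intro ℓ hℓ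
    rw [fourierCoeff_eq_intervalIntegral (fun θ : UnitAddCircle => (WHK R θ : ℂ)) (ℓ : ℤ) (-(1/2))]
    rw [show (-(1/2) + 1 : ℝ) = 1/2 by norm_num]
    rw [intervalIntegral.integral_congr
      (g := fun x : ℝ => Complex.exp ((-(2*π*ℓ) * Complex.I) * x)
        * ((max (R - 2 * π * |x|) 0 ^ 2 : ℝ) : ℂ)) ?_]
    · rw [cplx_part R hR0 hRπ ℓ hℓ]
      norm_num
    · intro x hx
      rw [Set.uIcc_of_le (by norm_num)] at hx
      have h1 : WHK R ((x : ℝ) : UnitAddCircle) = max (R - 2 * π * |x|) 0 ^ 2 :=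
        whk_coe R x (abs_le.mpr ⟨hx.1, hx.2⟩)
      show (fourier (-(ℓ:ℤ)) ((x : ℝ) : UnitAddCircle) : ℂ) • ((WHK R ((x:ℝ) : UnitAddCircle) : ℝ) : ℂ) = _
      rw [h1, smul_eq_mul, fourier_coe_apply]
      congr 1
      push_cast
      ring
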